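/- Let $f, g : \mathbb{R} \to \mathbb{R}$ be real-analytic functions such that $\cos(f(t)) = \cos(g(t))$ for all $t$ in a nonempty open interval $I$. Then either there exists an integer $p$ such that $f(t) = g(t) + 2p\pi$ for all $t \in I$, or there exists an integer $p$ such that $f(t) = -g(t) + 2p\pi$ for all $t \in I$. -/
import Mathlib

open Set Filter Topology

/-- `Real.sin` is analytic at every point. -/
lemma analyticAt_rsin (x : ℝ) : AnalyticAt ℝ Real.sin x := by
  have : Real.sin = fun y : ℝ => (Complex.sin y).re := by
    ext y; rw [Complex.sin_ofReal_re]
  rw [this]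
  exact (Complex.reCLM.analyticAt _).comp
    (((Complex.differentiable_sin.analyticAt _).restrictScalars).comp
      (Complex.ofRealCLM.analyticAt _))

/-- Product of analytic functions vanishing on an open interval implies one factor
vanishes identically. -/
lemma mul_eq_zero_analytic {F G : ℝ → ℝ} {a b : ℝ} (hab : a < b)
    (hF : AnalyticOnNhd ℝ F (Set.Ioo a b)) (hG : AnalyticOnNhd ℝ G (Set.Ioo a b))
    (hFG : ∀ t ∈ Set.Ioo a b, F t * G t = 0) :
    (∀ t ∈ Set.Ioo a b, F t = 0) ∨ (∀ t ∈ Set.Ioo a b, G t = 0) := by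
  have hx₀ : (a + b) / 2 ∈ Set.Ioo a b := ⟨by linarith, by linarith⟩
  rcases hG.eqOn_zero_or_eventually_ne_zero_of_preconnected isPreconnected_Ioo with hGz | hne
  · exact Or.inr fun t ht => hGz ht
  · left
    intro t ht
    refine hF.eqOn_zero_of_preconnected_of_frequently_eq_zero isPreconnected_Ioo hx₀ ?_ ht
    -- F = 0 frequently in 𝓝[≠] x₀
    rw [Filter.eventually_iff, mem_codiscreteWithin] at hne
    have hdisj := hne _ hx₀
    rw [disjoint_principal_right] at hdisj
    have hmem : Set.Ioo a b ∈ 𝓝[≠] ((a + b) / 2) :=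
      nhdsWithin_le_nhds (isOpen_Ioo.mem_nhds hx₀)
    have hev : ∀ᶠ x in 𝓝[≠] ((a + b) / 2), F x = 0 := by
      filter_upwards [hdisj, hmem] with x hx hxI
      have hGx : G x ≠ 0 := by
        by_contra hc
        exact hx ⟨hxI, by simpa using hc⟩
      have := hFG x hxI
      rcases mul_eq_zero.mp this with h | h
      · exact h
      · exact absurd h hGx
    exact hev.frequently

/-- A continuous function on an interval with values in `2πℤ` is constant. -/
lemma const_of_int_mul {h : ℝ → ℝ} {a b : ℝ} (hab : a < b)
    (hc : ContinuousOn h (Set.Ioo a b))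
    (hz : ∀ t ∈ Set.Ioo a b, ∃ k : ℤ, h t = 2 * k * Real.pi) :
    ∃ p : ℤ, ∀ t ∈ Set.Ioo a b, h t = 2 * p * Real.pi := by
  have hx₀ : (a + b) / 2 ∈ Set.Ioo a b := ⟨by linarith, by linarith⟩
  obtain ⟨p, hp⟩ := hz _ hx₀
  refine ⟨p, fun t ht => ?_⟩
  obtain ⟨k, hk⟩ := hz t ht
  have himg : IsPreconnected (h '' Set.Ioo a b) :=
    (isPreconnected_Ioo).image h hc
  have hord := himg.ordConnected
  have hπ := Real.pi_pos
  have key : ∀ k p : ℤ, k < p → (2 * (k : ℝ) * Real.pi) ∈ h '' Set.Ioo a b →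
      (2 * (p : ℝ) * Real.pi) ∈ h '' Set.Ioo a b → False := by
    intro k p hlt h1 h2
    have hmid : ((2 * k + 1 : ℤ) : ℝ) * Real.pi ∈
        Set.Icc (2 * (k:ℝ) * Real.pi) (2 * (p:ℝ) * Real.pi) := by
      constructor
      · push_cast; nlinarith
      · push_cast
        have : (k : ℝ) + 1 ≤ p := by exact_mod_cast hlt
        nlinarith
    obtain ⟨s, hs, hsv⟩ := hord.out h1 h2 hmid
    obtain ⟨m, hm⟩ := hz s hs
    rw [hm] at hsv
    have heq : (2 * (m:ℝ)) * Real.pi = ((2 * k + 1 : ℤ) : ℝ) * Real.pi := by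
      exact hsv
    have h2m : (2 * (m:ℝ)) = ((2 * k + 1 : ℤ) : ℝ) :=
      mul_right_cancel₀ (ne_of_gt hπ) heq
    have : 2 * m = 2 * k + 1 := by exact_mod_cast h2m
    omega
  have h1 : (2 * (k : ℝ) * Real.pi) ∈ h '' Set.Ioo a b := ⟨t, ht, hk⟩
  have h2 : (2 * (p : ℝ) * Real.pi) ∈ h '' Set.Ioo a b := ⟨_, hx₀, hp⟩
  rcases lt_trichotomy k p with hlt | heq | hgt
  · exact absurd (key k p hlt h1 h2) (fun hfalse => hfalse)
  · rw [heq] at hk; exact hk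
  · exact absurd (key p k hgt h2 h1) (fun hfalse => hfalse)

theorem stmt_2 (f g : ℝ → ℝ) (a b : ℝ) (hab : a < b)
    (hf : AnalyticOnNhd ℝ f (Set.Ioo a b))
    (hg : AnalyticOnNhd ℝ g (Set.Ioo a b))
    (h : ∀ t ∈ Set.Ioo a b, Real.cos (f t) = Real.cos (g t)) :
    (∃ p : ℤ, ∀ t ∈ Set.Ioo a b, f t = g t + 2 * p * Real.pi) ∨
    (∃ p : ℤ, ∀ t ∈ Set.Ioo a b, f t = -g t + 2 * p * Real.pi) := by
  set F : ℝ → ℝ := fun t => Real.sin ((f t + g t) / 2) with hFdef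
  set G : ℝ → ℝ := fun t => Real.sin ((f t - g t) / 2) with hGdef
  have hFa : AnalyticOnNhd ℝ F (Set.Ioo a b) := fun x hx =>
    (analyticAt_rsin _).comp (((hf x hx).add (hg x hx)).div analyticAt_const (by norm_num))
  have hGa : AnalyticOnNhd ℝ G (Set.Ioo a b) := fun x hx =>
    (analyticAt_rsin _).comp (((hf x hx).sub (hg x hx)).div analyticAt_const (by norm_num))
  have hFG : ∀ t ∈ Set.Ioo a b, F t * G t = 0 := by
    intro t ht
    have := h t ht
    have hcc := Real.cos_sub_cos (f t) (g t)
    have : (-2 : ℝ) * F t * G t = 0 := by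
      rw [hFdef, hGdef]; simp only []
      rw [← hcc, this, sub_self]
    linarith [this]
  rcases mul_eq_zero_analytic hab hFa hGa hFG with hFz | hGz
  · -- sin((f+g)/2) = 0 : f = -g + 2pπ
    right
    have hcont : ContinuousOn (fun t => f t + g t) (Set.Ioo a b) :=
      (hf.continuousOn).add (hg.continuousOn)
    have hz : ∀ t ∈ Set.Ioo a b, ∃ k : ℤ, f t + g t = 2 * k * Real.pi := by
      intro t ht
      have := hFz t ht
      rw [hFdef] at this
      simp only [] at this
      rw [Real.sin_eq_zero_iff] at this
      obtain ⟨n, hn⟩ := this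
      refine ⟨n, ?_⟩
      have : f t + g t = 2 * (n * Real.pi) := by linarith [hn]
      linarith [this]
    obtain ⟨p, hp⟩ := const_of_int_mul hab hcont hz
    exact ⟨p, fun t ht => by linarith [hp t ht]⟩
  · left
    have hcont : ContinuousOn (fun t => f t - g t) (Set.Ioo a b) :=
      (hf.continuousOn).sub (hg.continuousOn)
    have hz : ∀ t ∈ Set.Ioo a b, ∃ k : ℤ, f t - g t = 2 * k * Real.pi := by
      intro t ht
      have := hGz t ht
      rw [hGdef] at this
      simp only [] at this
      rw [Real.sin_eq_zero_iff] at this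
      obtain ⟨n, hn⟩ := this
      refine ⟨n, ?_⟩
      have : f t - g t = 2 * (n * Real.pi) := by linarith [hn]
      linarith [this]
    obtain ⟨p, hp⟩ := const_of_int_mul hab hcont hz
    exact ⟨p, fun t ht => by linarith [hp t ht]⟩
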